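/- Let P be a GMMN instance, let Q ⊆ P and X ⊆ Q be such that no pair in Q \ X is adjacent in IG[P] to any pair in P \ Q. Let N1 = (π¹_w)_{w∈P} and N2 = (π²_w)_{w∈P} be feasible solutions in Feas(P) with π¹_v = π²_v for every v ∈ X. If ‖∪_{w∈Q} π¹_w‖ < ‖∪_{w∈Q} π²_w‖, then N2 is suboptimal, i.e., N2 ∉ Opt(P). (This is the separation lemma of Appendix A, where Q = P_t and X = X_t come from a tree decomposition.) -/

import Mathlib

noncomputable section
open scoped Classical

/-- A point in the Euclidean plane. -/
abbrev Point : Type := ℝ × ℝ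

/-- The Manhattan distance `d(p, q)`. -/
def manh (p q : Point) : ℝ := |p.1 - q.1| + |p.2 - q.2|

/-- The Euclidean length `‖pq‖` of the segment between `p` and `q`. -/
def euclen (p q : Point) : ℝ := Real.sqrt ((p.1 - q.1) ^ 2 + (p.2 - q.2) ^ 2)

/-- The segment `pq` is axis-aligned. -/
def axisAligned (p q : Point) : Prop := p.1 = q.1 ∨ p.2 = q.2

/-- `z` lies in the bounding box `B(a, b)` (componentwise between `a ⊓ b` and `a ⊔ b`). -/
def inBox (a b z : Point) : Prop := a ⊓ b ≤ z ∧ z ≤ a ⊔ b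

lemma euclen_comm (p q : Point) : euclen p q = euclen q p := by
  unfold euclen; ring_nf

/-- Length of an (unordered) edge. -/
def sym2Len : Sym2 Point → ℝ := Sym2.lift ⟨euclen, euclen_comm⟩

/-- The length of a network, given by its (finite) edge set. -/
def netLength (N : Finset (Sym2 Point)) : ℝ := ∑ e ∈ N, sym2Len e

/-- A (simple) path in the plane, given by its sequence of (distinct) vertices. -/
structure GPath where
  k : ℕ
  pts : Fin (k + 1) → Point
  inj : Function.Injective pts

/-- The `i`-th edge of a path. -/
def GPath.edge (π : GPath) (i : Fin π.k) : Sym2 Point :=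
  s(π.pts i.castSucc, π.pts i.succ)

/-- The edge set of a path. -/
def GPath.edges (π : GPath) : Finset (Sym2 Point) :=
  Finset.image π.edge Finset.univ

/-- The total (Euclidean) length of a path. -/
def GPath.length (π : GPath) : ℝ :=
  ∑ i : Fin π.k, euclen (π.pts i.castSucc) (π.pts i.succ)

/-- `π` is a Manhattan path (M-path) for the pair `(s, t)`: an `s`–`t` path all of whose
edges are axis-aligned and whose total length equals the Manhattan distance `d(s, t)`. -/
def IsMPath (s t : Point) (π : GPath) : Prop :=
  π.pts 0 = s ∧ π.pts (Fin.last π.k) = t ∧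
  (∀ i : Fin π.k, axisAligned (π.pts i.castSucc) (π.pts i.succ)) ∧
  π.length = manh s t

/-- A GMMN instance: a finite set of pairs of points. -/
abbrev Inst : Type := Finset (Point × Point)

/-- The vertex set of the Hanan grid `H(P)`. -/
def hananV (P : Inst) : Finset Point :=
  ((P.image fun v => v.1.1) ∪ (P.image fun v => v.2.1)) ×ˢ
  ((P.image fun v => v.1.2) ∪ (P.image fun v => v.2.2))

/-- `{p, q}` is an edge of the Hanan grid `H(P)`: an axis-aligned segment between two distinct
grid vertices containing no third grid vertex. -/
def IsHananEdge (P : Inst) (p q : Point) : Prop :=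
  p ∈ hananV P ∧ q ∈ hananV P ∧ p ≠ q ∧ axisAligned p q ∧
  ∀ z ∈ hananV P, inBox p q z → z = p ∨ z = q

/-- All edges of the path `π` are edges of the Hanan grid `H(P)`. -/
def OnGrid (P : Inst) (π : GPath) : Prop :=
  ∀ i : Fin π.k, IsHananEdge P (π.pts i.castSucc) (π.pts i.succ)

/-- `π ∈ Π_P(u)`: an M-path for the pair `u` that is a subgraph of the Hanan grid `H(P)`. -/
def InPi (P : Inst) (u : Point × Point) (π : GPath) : Prop :=
  IsMPath u.1 u.2 π ∧ OnGrid P π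

/-- The network `∪_{v ∈ P} π_v` determined by a choice of M-paths. -/
def netOf (P : Inst) (f : Point × Point → GPath) : Finset (Sym2 Point) :=
  P.biUnion fun v => (f v).edges

/-- `f` gives a feasible solution in `Feas(P)`: an M-path on the Hanan grid for each pair. -/
def IsFeasChoice (P : Inst) (f : Point × Point → GPath) : Prop :=
  ∀ v ∈ P, InPi P v (f v)

/-- `f` gives an optimal solution in `Opt(P)`. -/
def IsOptChoice (P : Inst) (f : Point × Point → GPath) : Prop :=
  IsFeasChoice P f ∧
  ∀ g : Point × Point → GPath, IsFeasChoice P g →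
    netLength (netOf P f) ≤ netLength (netOf P g)

/-- Adjacency in the intersection graph `IG[P]`: `u ≠ v` and the induced subgrids
`H(P, u)` and `H(P, v)` share an edge. -/
def IGAdj (P : Inst) (u v : Point × Point) : Prop :=
  u ≠ v ∧ ∃ p q : Point, IsHananEdge P p q ∧
    inBox u.1 u.2 p ∧ inBox u.1 u.2 q ∧ inBox v.1 v.2 p ∧ inBox v.1 v.2 q

/-- The total length `‖π₁ ∩ π₂‖` of the segments shared by two paths. -/
def sharedLen (π₁ π₂ : GPath) : ℝ := netLength (π₁.edges ∩ π₂.edges)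

/-- A pair `(p, q)` with `p_x ≤ q_x` is regular if `p_y ≤ q_y`. -/
def Regular (u : Point × Point) : Prop := u.1.1 ≤ u.2.1 ∧ u.1.2 ≤ u.2.2

/-- A pair `(p, q)` with `p_x ≤ q_x` is flipped if `p_y ≥ q_y`. -/
def Flipped (u : Point × Point) : Prop := u.1.1 ≤ u.2.1 ∧ u.2.2 ≤ u.1.2

/-- The intersection graph `IG[P]` as a simple graph on the pairs of `P`. -/
def IG (P : Inst) : SimpleGraph {v : Point × Point // v ∈ P} where
  Adj u v := IGAdj P u.1 v.1
  symm := ⟨by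
    rintro u v ⟨hne, p, q, he, h1, h2, h3, h4⟩
    exact ⟨hne.symm, p, q, he, h3, h4, h1, h2⟩⟩
  loopless := ⟨fun u h => h.1 rfl⟩


/- ### Auxiliary lemmas -/

lemma euclen_nonneg (p q : Point) : 0 ≤ euclen p q := Real.sqrt_nonneg _

lemma sym2Len_nonneg (e : Sym2 Point) : 0 ≤ sym2Len e := by
  induction e using Sym2.ind with
  | _ a b => exact Real.sqrt_nonneg _

lemma euclen_eq_manh_of_axis {p q : Point} (h : axisAligned p q) :
    euclen p q = manh p q := by
  rcases h with h | h
  · rw [euclen, manh, h]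
    simp [Real.sqrt_sq_eq_abs]
  · rw [euclen, manh, h]
    simp [Real.sqrt_sq_eq_abs]

lemma abs_sub_le_sum_Ico (X : ℕ → ℝ) (m : ℕ) :
    ∀ n, m ≤ n → |X m - X n| ≤ ∑ i ∈ Finset.Ico m n, |X i - X (i + 1)| := by
  intro n
  induction n with
  | zero => intro h; interval_cases m; simp
  | succ n ih =>
    intro h
    rcases Nat.lt_or_ge m (n + 1) with hm | hm
    · have hmn : m ≤ n := Nat.lt_succ_iff.mp hm
      rw [Finset.sum_Ico_succ_top hmn]
      calc |X m - X (n + 1)| ≤ |X m - X n| + |X n - X (n + 1)| := abs_sub_le _ _ _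
        _ ≤ (∑ i ∈ Finset.Ico m n, |X i - X (i + 1)|) + |X n - X (n + 1)| := by
            linarith [ih hmn]
    · have : m = n + 1 := le_antisymm h hm
      subst this; simp

lemma between_of_abs_add (a b c : ℝ) (h : |a - c| + |c - b| = |a - b|) :
    a ⊓ b ≤ c ∧ c ≤ a ⊔ b := by
  have h1 : a - c ≤ |a - c| := le_abs_self _
  have h2 : c - a ≤ |a - c| := by rw [abs_sub_comm]; exact le_abs_self _
  have h3 : c - b ≤ |c - b| := le_abs_self _
  have h4 : b - c ≤ |c - b| := by rw [abs_sub_comm]; exact le_abs_self _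
  rcases le_total a b with hab | hab
  · have hab' : |a - b| = b - a := by rw [abs_of_nonpos (by linarith)]; ring
    rw [hab'] at h
    exact ⟨le_trans inf_le_left (by linarith), le_trans (by linarith) le_sup_right⟩
  · have hab' : |a - b| = a - b := abs_of_nonneg (by linarith)
    rw [hab'] at h
    exact ⟨le_trans inf_le_right (by linarith), le_trans (by linarith) le_sup_left⟩

/-- Every vertex of an M-path for `(s, t)` lies in the bounding box `B(s, t)`. -/
lemma mpath_mem_box {s t : Point} {π : GPath} (hπ : IsMPath s t π) (j : Fin (π.k + 1)) :
    inBox s t (π.pts j) := by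
  obtain ⟨hs, ht, hax, hlen⟩ := hπ
  set p' : ℕ → Point := fun n => π.pts ⟨min n π.k, Nat.lt_succ_of_le (min_le_right _ _)⟩
    with hp'
  have hp'eq : ∀ (n : ℕ) (hn : n < π.k + 1), p' n = π.pts ⟨n, hn⟩ := by
    intro n hn
    simp only [hp']
    congr 1
    exact Fin.ext (by simp; omega)
  have h0 : (0 : Fin (π.k + 1)) = ⟨0, Nat.succ_pos _⟩ := Fin.ext (by simp)
  have hlast : Fin.last π.k = ⟨π.k, Nat.lt_succ_self _⟩ := Fin.ext (by simp)
  have hs0 : p' 0 = s := by rw [hp'eq 0 (Nat.succ_pos _), ← h0, hs]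
  have ht0 : p' π.k = t := by rw [hp'eq π.k (Nat.lt_succ_self _), ← hlast, ht]
  have hsum : (∑ i ∈ Finset.range π.k, |(p' i).1 - (p' (i + 1)).1|)
      + (∑ i ∈ Finset.range π.k, |(p' i).2 - (p' (i + 1)).2|) = manh s t := by
    rw [← Finset.sum_add_distrib, ← hlen, GPath.length,
      ← Fin.sum_univ_eq_sum_range
        (fun n => |(p' n).1 - (p' (n + 1)).1| + |(p' n).2 - (p' (n + 1)).2|) π.k]
    apply Finset.sum_congr rfl
    intro i _
    have h1 : π.pts i.castSucc = p' i.val := by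
      rw [hp'eq i.val (Nat.lt_succ_of_lt i.isLt)]
      congr 1
    have h2 : π.pts i.succ = p' (i.val + 1) := by
      rw [hp'eq (i.val + 1) (Nat.succ_lt_succ i.isLt)]
      congr 1
    rw [h1, h2, euclen_eq_manh_of_axis (by rw [← h1, ← h2]; exact hax i)]
    rfl
  have hj : j.val ≤ π.k := Nat.lt_succ_iff.mp j.isLt
  have hA1 := abs_sub_le_sum_Ico (fun n => (p' n).1) 0 j.val (Nat.zero_le _)
  have hA2 := abs_sub_le_sum_Ico (fun n => (p' n).1) j.val π.k hj
  have hB1 := abs_sub_le_sum_Ico (fun n => (p' n).2) 0 j.val (Nat.zero_le _)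
  have hB2 := abs_sub_le_sum_Ico (fun n => (p' n).2) j.val π.k hj
  have hsplitX : (∑ i ∈ Finset.range π.k, |(p' i).1 - (p' (i + 1)).1|)
      = (∑ i ∈ Finset.Ico 0 j.val, |(p' i).1 - (p' (i + 1)).1|)
      + (∑ i ∈ Finset.Ico j.val π.k, |(p' i).1 - (p' (i + 1)).1|) := by
    rw [Finset.range_eq_Ico, ← Finset.sum_Ico_consecutive _ (Nat.zero_le j.val) hj]
  have hsplitY : (∑ i ∈ Finset.range π.k, |(p' i).2 - (p' (i + 1)).2|)
      = (∑ i ∈ Finset.Ico 0 j.val, |(p' i).2 - (p' (i + 1)).2|)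
      + (∑ i ∈ Finset.Ico j.val π.k, |(p' i).2 - (p' (i + 1)).2|) := by
    rw [Finset.range_eq_Ico, ← Finset.sum_Ico_consecutive _ (Nat.zero_le j.val) hj]
  have htriX : |(p' 0).1 - (p' π.k).1|
      ≤ |(p' 0).1 - (p' j.val).1| + |(p' j.val).1 - (p' π.k).1| := abs_sub_le _ _ _
  have htriY : |(p' 0).2 - (p' π.k).2|
      ≤ |(p' 0).2 - (p' j.val).2| + |(p' j.val).2 - (p' π.k).2| := abs_sub_le _ _ _
  have hmanh : manh s t = |(p' 0).1 - (p' π.k).1| + |(p' 0).2 - (p' π.k).2| := by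
    rw [hs0, ht0]; rfl
  have heqX : |(p' 0).1 - (p' j.val).1| + |(p' j.val).1 - (p' π.k).1|
      = |(p' 0).1 - (p' π.k).1| := by linarith
  have heqY : |(p' 0).2 - (p' j.val).2| + |(p' j.val).2 - (p' π.k).2|
      = |(p' 0).2 - (p' π.k).2| := by linarith
  have hx := between_of_abs_add _ _ _ heqX
  have hy := between_of_abs_add _ _ _ heqY
  rw [hs0, ht0] at hx hy
  have hjp : π.pts j = p' j.val := by
    rw [hp'eq j.val j.isLt, Fin.eta]
  rw [inBox, hjp]
  exact ⟨⟨hx.1, hy.1⟩, ⟨hx.2, hy.2⟩⟩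

lemma biUnion_union' {α β : Type*} [DecidableEq α] [DecidableEq β]
    (s t : Finset α) (f : α → Finset β) :
    (s ∪ t).biUnion f = s.biUnion f ∪ t.biUnion f := by
  ext x
  simp only [Finset.mem_biUnion, Finset.mem_union]
  constructor
  · rintro ⟨a, ha | ha, hx⟩
    · exact Or.inl ⟨a, ha, hx⟩
    · exact Or.inr ⟨a, ha, hx⟩
  · rintro (⟨a, ha, hx⟩ | ⟨a, ha, hx⟩)
    · exact ⟨a, Or.inl ha, hx⟩
    · exact ⟨a, Or.inr ha, hx⟩

/-- Any edge of a path in `Π_P(u)` is a Hanan edge whose endpoints lie in `B(u)`. -/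
lemma edge_info (P : Inst) {u : Point × Point} {π : GPath} (h : InPi P u π)
    {e : Sym2 Point} (he : e ∈ π.edges) :
    ∃ p q : Point, e = s(p, q) ∧ IsHananEdge P p q ∧
      inBox u.1 u.2 p ∧ inBox u.1 u.2 q := by
  obtain ⟨i, -, rfl⟩ := Finset.mem_image.mp he
  exact ⟨_, _, rfl, h.2 i, mpath_mem_box h.1 i.castSucc, mpath_mem_box h.1 i.succ⟩

/-- The separation lemma of Appendix A: if no pair of `Q \ X` is adjacent in `IG[P]` to a pair
outside `Q`, and two feasible solutions agree on `X` but the first is strictly shorter on `Q`,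
then the second is not optimal. -/
theorem separation_suboptimal (P : Inst) (Q X : Finset (Point × Point))
    (hQ : Q ⊆ P) (hX : X ⊆ Q)
    (hsep : ∀ w ∈ Q, w ∉ X → ∀ u ∈ P, u ∉ Q → ¬ IGAdj P w u)
    (f g : Point × Point → GPath)
    (hf : IsFeasChoice P f) (hg : IsFeasChoice P g)
    (hagree : ∀ v ∈ X, f v = g v)
    (hlt : netLength (Q.biUnion fun w => (f w).edges) <
           netLength (Q.biUnion fun w => (g w).edges)) :
    ¬ IsOptChoice P g := by
  intro hopt
  classical
  set A := Q.biUnion fun w => (f w).edges with hAdef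
  set B := Q.biUnion fun w => (g w).edges with hBdef
  set C := (P \ Q).biUnion fun w => (g w).edges with hCdef
  set c : Point × Point → GPath := fun v => if v ∈ Q then f v else g v with hc
  have hfeas : IsFeasChoice P c := by
    intro v hv
    by_cases hvQ : v ∈ Q
    · simpa [hc, hvQ] using hf v hv
    · simpa [hc, hvQ] using hg v hv
  have hPQ : Q ∪ (P \ Q) = P := Finset.union_sdiff_of_subset hQ
  have hnet_c : netOf P c = A ∪ C := by
    rw [netOf, ← hPQ, biUnion_union' ..]
    congr 1
    · exact Finset.biUnion_congr rfl fun w hw => by simp [hc, hw]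
    · exact Finset.biUnion_congr rfl fun w hw => by
        simp [hc, (Finset.mem_sdiff.mp hw).2]
  have hnet_g : netOf P g = B ∪ C := by
    rw [netOf, ← hPQ, biUnion_union' ..]
  have hsub : C \ A ⊆ C \ B := by
    intro e he
    rw [Finset.mem_sdiff] at he ⊢
    refine ⟨he.1, fun heB => he.2 ?_⟩
    obtain ⟨w, hwQ, hew⟩ := Finset.mem_biUnion.mp heB
    by_cases hwX : w ∈ X
    · exact Finset.mem_biUnion.mpr ⟨w, hwQ, by rw [hagree w hwX]; exact hew⟩
    · exfalso
      obtain ⟨u, hu, heu⟩ := Finset.mem_biUnion.mp he.1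
      rw [Finset.mem_sdiff] at hu
      obtain ⟨p, q, hepq, hH, hwp, hwq⟩ := edge_info P (hg w (hQ hwQ)) hew
      obtain ⟨p', q', hepq', hH', hup, huq⟩ := edge_info P (hg u hu.1) heu
      have hne : w ≠ u := fun hh => hu.2 (hh ▸ hwQ)
      apply hsep w hwQ hwX u hu.1 hu.2
      rcases Sym2.eq_iff.mp (hepq.symm.trans hepq') with ⟨h1, h2⟩ | ⟨h1, h2⟩
      · exact ⟨hne, p, q, hH, hwp, hwq, by rw [h1]; exact hup, by rw [h2]; exact huq⟩
      · exact ⟨hne, p, q, hH, hwp, hwq, by rw [h1]; exact huq, by rw [h2]; exact hup⟩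
  have hle : netLength (C \ A) ≤ netLength (C \ B) :=
    Finset.sum_le_sum_of_subset_of_nonneg hsub fun e _ _ => sym2Len_nonneg e
  have hAC : netLength (A ∪ C) = netLength A + netLength (C \ A) := by
    rw [netLength, ← Finset.union_sdiff_self_eq_union,
      Finset.sum_union Finset.disjoint_sdiff]
    rfl
  have hBC : netLength (B ∪ C) = netLength B + netLength (C \ B) := by
    rw [netLength, ← Finset.union_sdiff_self_eq_union,
      Finset.sum_union Finset.disjoint_sdiff]
    rfl
  have hlt2 : netLength (netOf P c) < netLength (netOf P g) := by
    rw [hnet_c, hnet_g, hAC, hBC]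
    linarith
  exact absurd (hopt.2 c hfeas) (not_le.mpr hlt2)

end
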